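/- Let A and B be positive invertible operators with 0 < m·I ≤ A ≤ M·I and A ≤ B. Then for every p ≥ 1, A^p ≤ K(m,M,p) · B^p ≤ (M/m)^{p−1} · B^p, where K(m,M,p) = ((p−1)^{p−1}/p^p) · (M^p − m^p)^p / ((M−m)(mM^p − Mm^p)^{p−1}) is the generalized Kantorovich constant. -/

import Mathlib

set_option maxHeartbeats 1000000
set_option synthInstance.maxHeartbeats 400000


/-- The generalized Kantorovich (Ky Fan–Furuta) constant
`K(m,M,p) = ((p-1)^{p-1}/p^p) · (M^p - m^p)^p / ((M-m)(m M^p - M m^p)^{p-1})`. -/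
noncomputable def kantorovichConst (m M p : ℝ) : ℝ :=
  ((p - 1) ^ (p - 1) / p ^ p) * (M ^ p - m ^ p) ^ p /
    ((M - m) * (m * M ^ p - M * m ^ p) ^ (p - 1))

/-- Bernoulli's inequality in convenient form. -/
private lemma bern_aux {p : ℝ} (hp : 1 ≤ p) {x : ℝ} (hx : 0 < x) :
    1 + p * (x - 1) ≤ x ^ p := by
  have h := one_add_mul_self_le_rpow_one_add (s := x - 1) (by linarith) hp
  rwa [show (1 : ℝ) + (x - 1) = x by ring] at h

/-- Let `A ≤ B` be positive invertible operators with `m • 1 ≤ A ≤ M • 1`, `0 < m < M`.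
Then for every real `p ≥ 1`, `A^p ≤ K(m,M,p) • B^p ≤ (M/m)^{p-1} • B^p`. -/
theorem rpow_le_kantorovich_rpow
    {H : Type*} [NormedAddCommGroup H] [InnerProductSpace ℂ H] [CompleteSpace H]
    (A B : H →L[ℂ] H) (hA : 0 ≤ A) (hB : 0 ≤ B)
    (hAinv : Invertible A) (hBinv : Invertible B)
    (m M : ℝ) (hm : 0 < m) (hmM : m < M)
    (h1 : m • (1 : H →L[ℂ] H) ≤ A) (h2 : A ≤ M • (1 : H →L[ℂ] H))
    (hAB : A ≤ B) (p : ℝ) (hp : 1 ≤ p) :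
    A ^ p ≤ kantorovichConst m M p • B ^ p ∧
      kantorovichConst m M p • B ^ p ≤ ((M / m) ^ (p - 1)) • B ^ p := by
  have hAsa : IsSelfAdjoint A := .of_nonneg hA
  have hBsa : IsSelfAdjoint B := .of_nonneg hB
  have hM : (0:ℝ) < M := hm.trans hmM
  have hsm : algebraMap ℝ (H →L[ℂ] H) m ≤ A := by
    rwa [Algebra.algebraMap_eq_smul_one]
  have hsM : A ≤ algebraMap ℝ (H →L[ℂ] H) M := by
    rwa [Algebra.algebraMap_eq_smul_one]
  have specA1 : ∀ x ∈ spectrum ℝ A, m ≤ x :=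
    (algebraMap_le_iff_le_spectrum (a := A) hAsa).mp hsm
  have specA2 : ∀ x ∈ spectrum ℝ A, x ≤ M :=
    (le_algebraMap_iff_spectrum_le (a := A) hAsa).mp hsM
  have specB1 : ∀ x ∈ spectrum ℝ B, m ≤ x :=
    (algebraMap_le_iff_le_spectrum (a := B) hBsa).mp (hsm.trans hAB)
  -- real powers as real cfc
  have hrpow : ∀ (T : H →L[ℂ] H), 0 ≤ T → T ^ p = cfc (fun x : ℝ => x ^ p) T := by
    intro T hT
    rw [← CFC.rpow_eq_pow, CFC.rpow, cfc_nnreal_eq_real _ T hT]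
    refine cfc_congr fun x hx => ?_
    have hx' : (0:ℝ) ≤ x := spectrum_nonneg_of_nonneg hT hx
    simp [NNReal.coe_rpow, Real.coe_toNNReal x hx']
  have hcontp : Continuous fun x : ℝ => x ^ p :=
    continuous_iff_continuousAt.mpr fun x =>
      Real.continuousAt_rpow_const x p (Or.inr (by linarith))
  rcases eq_or_lt_of_le hp with rfl | hp1
  · -- the case `p = 1`
    have hMm : M - m ≠ 0 := sub_ne_zero.mpr hmM.ne'
    have hK : kantorovichConst m M 1 = 1 := by
      simp only [kantorovichConst, sub_self, Real.rpow_zero, Real.rpow_one]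
      field_simp
    constructor
    · rw [hK, one_smul, CFC.rpow_one A hA, CFC.rpow_one B hB]
      exact hAB
    · rw [hK, sub_self, Real.rpow_zero, one_smul]
  · -- the case `1 < p`
    have hp0 : (0:ℝ) < p := by linarith
    have hq0 : (0:ℝ) < p - 1 := by linarith
    have hd : (0:ℝ) < M - m := by linarith
    have hsplit : ∀ x : ℝ, x ≠ 0 → x ^ p = x ^ (p - 1) * x := by
      intro x hx
      rw [← Real.rpow_add_one hx (p - 1)]
      norm_num
    obtain ⟨a1, ha1def⟩ : ∃ a1 : ℝ, a1 = M ^ p - m ^ p := ⟨_, rfl⟩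
    obtain ⟨b1, hb1def⟩ : ∃ b1 : ℝ, b1 = m * M ^ p - M * m ^ p := ⟨_, rfl⟩
    have hmp : (0:ℝ) < m ^ p := Real.rpow_pos_of_pos hm p
    have hMp : (0:ℝ) < M ^ p := Real.rpow_pos_of_pos hM p
    have ha1 : 0 < a1 := ha1def ▸ sub_pos.mpr (Real.rpow_lt_rpow hm.le hmM hp0)
    have hmono : m ^ (p-1) < M ^ (p-1) := Real.rpow_lt_rpow hm.le hmM hq0
    have hb1 : 0 < b1 := by
      rw [hb1def, hsplit M hM.ne', hsplit m hm.ne']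
      nlinarith [mul_pos (mul_pos hm hM) (sub_pos.mpr hmono)]
    obtain ⟨t0, ht0def⟩ : ∃ t0 : ℝ, t0 = b1 * p / ((p - 1) * a1) := ⟨_, rfl⟩
    have ht0 : 0 < t0 := ht0def ▸ div_pos (mul_pos hb1 hp0) (mul_pos hq0 ha1)
    obtain ⟨α, hαdef⟩ : ∃ α : ℝ, α = a1 / (M - m) := ⟨_, rfl⟩
    obtain ⟨β, hβdef⟩ : ∃ β : ℝ, β = (M * m ^ p - m * M ^ p) / (M - m) := ⟨_, rfl⟩
    have hα : 0 < α := hαdef ▸ div_pos ha1 hd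
    obtain ⟨K, hKdef⟩ : ∃ K : ℝ, K = kantorovichConst m M p := ⟨_, rfl⟩
    rw [← hKdef]
    have hdne : (M - m) ≠ 0 := hd.ne'
    have hpne : p ≠ 0 := hp0.ne'
    have hqne : (p - 1) ≠ 0 := hq0.ne'
    have ha1ne : a1 ≠ 0 := ha1.ne'
    have hb1ne : b1 ≠ 0 := hb1.ne'
    have ht0ne : t0 ≠ 0 := ht0.ne'
    have hmne : m ≠ 0 := hm.ne'
    have hMne : M ≠ 0 := hM.ne'
    have hmpne : m ^ p ≠ 0 := hmp.ne'
    have hMpne : M ^ p ≠ 0 := hMp.ne'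
    -- positivity of various rpow quantities
    have hposb : (0:ℝ) < b1 ^ (p-1) := Real.rpow_pos_of_pos hb1 _
    have hposp : (0:ℝ) < p ^ (p-1) := Real.rpow_pos_of_pos hp0 _
    have hposq : (0:ℝ) < (p-1) ^ (p-1) := Real.rpow_pos_of_pos hq0 _
    have hposa : (0:ℝ) < a1 ^ (p-1) := Real.rpow_pos_of_pos ha1 _
    have hpost : (0:ℝ) < t0 ^ (p-1) := Real.rpow_pos_of_pos ht0 _
    have hpostp : (0:ℝ) < t0 ^ p := Real.rpow_pos_of_pos ht0 _
    -- the key identity for the Kantorovich constant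
    have hI : K = α / (p * t0 ^ (p - 1)) := by
      have h1 : t0 ^ (p-1) = b1 ^ (p-1) * p ^ (p-1) / ((p-1) ^ (p-1) * a1 ^ (p-1)) := by
        rw [ht0def, Real.div_rpow (by positivity) (by positivity),
          Real.mul_rpow hb1.le hp0.le, Real.mul_rpow hq0.le ha1.le]
      have ha1split : a1 ^ p = a1 ^ (p-1) * a1 := hsplit a1 ha1.ne'
      have hpsplit : p ^ p = p ^ (p-1) * p := hsplit p hp0.ne'
      rw [hKdef, kantorovichConst, ← ha1def, ← hb1def, h1, ha1split, hpsplit, hαdef]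
      field_simp
    have hKpos : 0 < K := by rw [hI]; positivity
    have ht0p : t0 ^ p = t0 ^ (p-1) * t0 := hsplit t0 ht0.ne'
    have hKt0 : K * t0 ^ p = α * t0 / p := by
      rw [hI, ht0p]
      field_simp
    have hβt0 : β = α * t0 * (1 - p) / p := by
      rw [hβdef, hαdef, ht0def, show M * m ^ p - m * M ^ p = -b1 by rw [hb1def]; ring]
      field_simp
      ring
    -- the chord lies below `K · t^p` for all positive `t`
    have hL2 : ∀ t : ℝ, 0 < t → α * t + β ≤ K * t ^ p := by
      intro t ht
      have hb := bern_aux hp (x := t / t0) (div_pos ht ht0)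
      rw [Real.div_rpow ht.le ht0.le] at hb
      calc α * t + β = K * t0 ^ p * (1 + p * (t / t0 - 1)) := by
            rw [hKt0, hβt0]
            field_simp
            ring
        _ ≤ K * t0 ^ p * (t ^ p / t0 ^ p) :=
            mul_le_mul_of_nonneg_left hb (by positivity)
        _ = K * t ^ p := by
            field_simp
    -- `m ≤ t0 ≤ M`
    have hmt0 : m ≤ t0 := by
      rw [ht0def, le_div_iff₀ (mul_pos hq0 ha1)]
      have hbM := bern_aux hp (x := M / m) (div_pos hM hm)
      rw [Real.div_rpow hM.le hm.le] at hbM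
      have h := mul_le_mul_of_nonneg_left hbM (by positivity : (0:ℝ) ≤ m * m ^ p)
      have h2 : m * m ^ p * (M ^ p / m ^ p) = m * M ^ p := by
        field_simp
      rw [h2] at h
      have h3 : m * m ^ p * (1 + p * (M / m - 1))
          = m * m ^ p + p * (M * m ^ p - m * m ^ p) := by
        field_simp
      rw [h3] at h
      rw [ha1def, hb1def]
      nlinarith [h]
    have ht0M : t0 ≤ M := by
      rw [ht0def, div_le_iff₀ (mul_pos hq0 ha1)]
      have hbm := bern_aux hp (x := m / M) (div_pos hm hM)
      rw [Real.div_rpow hm.le hM.le] at hbm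
      have h := mul_le_mul_of_nonneg_left hbm (by positivity : (0:ℝ) ≤ M * M ^ p)
      have h2 : M * M ^ p * (m ^ p / M ^ p) = M * m ^ p := by
        field_simp
      rw [h2] at h
      have h3 : M * M ^ p * (1 + p * (m / M - 1))
          = M * M ^ p + p * (m * M ^ p - M * M ^ p) := by
        field_simp
      rw [h3] at h
      rw [ha1def, hb1def]
      nlinarith [h]
    -- the chord at `t0` is below `M^{p-1} t0`
    have hchord : α * t0 + β ≤ M ^ (p-1) * t0 := by
      have hrw : α * t0 + β = (a1 * t0 + (M * m ^ p - m * M ^ p)) / (M - m) := by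
        rw [hαdef, hβdef]
        ring
      rw [hrw, div_le_iff₀ hd]
      have hint : (0:ℝ) ≤ (M - t0) * (m * (M ^ (p-1) - m ^ (p-1))) := by
        apply mul_nonneg (by linarith)
        apply mul_nonneg hm.le (by linarith)
      nlinarith [hint, hsplit M hM.ne', hsplit m hm.ne']
    -- `K ≤ (M/m)^{p-1}`
    have hC : (M / m) ^ (p-1) = M ^ (p-1) / m ^ (p-1) := Real.div_rpow hM.le hm.le _
    have hKC : K ≤ (M / m) ^ (p - 1) := by
      have h1 : K * t0 ^ p = α * t0 + β := by
        rw [hKt0, hβt0]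
        field_simp
        ring
      have hm1 : m ^ (p-1) ≤ t0 ^ (p-1) := Real.rpow_le_rpow hm.le hmt0 hq0.le
      have h2 : M ^ (p-1) * t0 ≤ (M / m) ^ (p-1) * t0 ^ p := by
        rw [hC, ht0p, div_mul_eq_mul_div, le_div_iff₀ (Real.rpow_pos_of_pos hm _)]
        nlinarith [mul_le_mul_of_nonneg_left hm1
          (mul_nonneg (Real.rpow_nonneg hM.le (p-1)) ht0.le)]
      have h3 : K * t0 ^ p ≤ (M / m) ^ (p-1) * t0 ^ p := by
        rw [h1]; exact hchord.trans h2
      exact le_of_mul_le_mul_right h3 hpostp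
    -- chord above the power function on `[m, M]`
    have hL1 : ∀ x : ℝ, m ≤ x → x ≤ M → x ^ p ≤ α * x + β := by
      intro x hx1 hx2
      have hconv := convexOn_rpow hp
      set lam := (M - x) / (M - m) with hlamdef
      set mu := (x - m) / (M - m) with hmudef
      have hlam0 : 0 ≤ lam := div_nonneg (by linarith) hd.le
      have hmu0 : 0 ≤ mu := div_nonneg (by linarith) hd.le
      have hsum : lam + mu = 1 := by
        rw [hlamdef, hmudef]
        field_simp
        ring
      have hxeq : lam • m + mu • M = x := by
        simp only [smul_eq_mul, hlamdef, hmudef]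
        field_simp
        ring
      have h := hconv.2 (Set.mem_Ici.mpr hm.le) (Set.mem_Ici.mpr hM.le) hlam0 hmu0 hsum
      rw [hxeq] at h
      simp only [smul_eq_mul] at h
      calc x ^ p ≤ lam * m ^ p + mu * M ^ p := h
        _ = α * x + β := by
            rw [hlamdef, hmudef, hαdef, hβdef, ha1def]
            field_simp
            ring
    -- operator computations
    have hcontKp : ContinuousOn (fun x : ℝ => K * x ^ p) (spectrum ℝ B) :=
      (continuous_const.mul hcontp).continuousOn
    have hcontCp : ContinuousOn (fun x : ℝ => (M / m) ^ (p-1) * x ^ p) (spectrum ℝ B) :=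
      (continuous_const.mul hcontp).continuousOn
    have key : ∀ T : H →L[ℂ] H, IsSelfAdjoint T →
        cfc (fun x : ℝ => α * x + β) T = α • T + algebraMap ℝ (H →L[ℂ] H) β := by
      intro T hT
      calc cfc (fun x : ℝ => α * x + β) T
          = cfc (fun x : ℝ => α * x) T + cfc (fun _ : ℝ => β) T :=
            cfc_add (a := T) (fun x : ℝ => α * x) (fun _ : ℝ => β)
              (by fun_prop) (by fun_prop)
        _ = α • T + algebraMap ℝ (H →L[ℂ] H) β := by
            rw [cfc_const_mul_id α T hT, cfc_const β T hT]
    have hstep1 : A ^ p ≤ cfc (fun x : ℝ => α * x + β) A := by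
      rw [hrpow A hA]
      exact cfc_mono (fun x hx => hL1 x (specA1 x hx) (specA2 x hx))
        hcontp.continuousOn (by fun_prop)
    have hsmul : α • A ≤ α • B := by
      have hBA : (0 : H →L[ℂ] H) ≤ B - A := sub_nonneg.mpr hAB
      have h0 : (0 : H →L[ℂ] H) ≤ α • (B - A) := by
        rw [← cfc_const_mul_id α (B - A) (IsSelfAdjoint.of_nonneg hBA)]
        exact cfc_nonneg fun x hx =>
          mul_nonneg hα.le (spectrum_nonneg_of_nonneg hBA hx)
      rw [← sub_nonneg, ← smul_sub]
      exact h0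
    have hstep3 : cfc (fun x : ℝ => α * x + β) B ≤ cfc (fun x : ℝ => K * x ^ p) B := by
      refine cfc_mono (fun x hx => ?_) (by fun_prop) hcontKp
      exact hL2 x (hm.trans_le (specB1 x hx))
    have hstep4 : cfc (fun x : ℝ => K * x ^ p) B = K • B ^ p := by
      rw [hrpow B hB]
      exact cfc_const_mul K (fun x : ℝ => x ^ p) B hcontp.continuousOn
    constructor
    · calc A ^ p ≤ cfc (fun x : ℝ => α * x + β) A := hstep1
        _ = α • A + algebraMap ℝ (H →L[ℂ] H) β := key A hAsa
        _ ≤ α • B + algebraMap ℝ (H →L[ℂ] H) β := add_le_add hsmul le_rfl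
        _ = cfc (fun x : ℝ => α * x + β) B := (key B hBsa).symm
        _ ≤ cfc (fun x : ℝ => K * x ^ p) B := hstep3
        _ = K • B ^ p := hstep4
    · rw [← hstep4]
      have hstep5 : cfc (fun x : ℝ => K * x ^ p) B
          ≤ cfc (fun x : ℝ => (M / m) ^ (p-1) * x ^ p) B := by
        refine cfc_mono (fun x hx => ?_) hcontKp hcontCp
        have hx0 : (0:ℝ) ≤ x ^ p := Real.rpow_nonneg (hm.le.trans (specB1 x hx)) p
        exact mul_le_mul_of_nonneg_right hKC hx0
      refine hstep5.trans (le_of_eq ?_)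
      rw [hrpow B hB]
      exact cfc_const_mul _ (fun x : ℝ => x ^ p) B hcontp.continuousOn
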